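/- Let T ≥ 1 be an integer, let ℓ_1,…,ℓ_T ∈ [0,1] be real numbers, and let m* ∈ [0,1]. Define m_t = (Σ_{τ=1}^{t−1} ℓ_τ) / max(1, t−1) for t = 1,…,T. Then: Σ_{t=1}^{T} (ℓ_t − m_t)² ≤ Σ_{t=1}^{T} (ℓ_t − m*)² + ln(T) + 1. -/

import Mathlib

lemma harmonic_le_log (T : ℕ) (hT : 1 ≤ T) :
    ∑ t ∈ Finset.Icc 1 T, (1:ℝ)/t ≤ Real.log T + 1 := by
  induction T with
  | zero => omega
  | succ n ih =>
    rcases Nat.lt_or_ge 1 (n+1) with h | h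
    · have hn : 1 ≤ n := by omega
      rw [Finset.sum_Icc_succ_top (by omega : 1 ≤ n+1)]
      have hnp : (0:ℝ) < n := by positivity
      have hnp1 : (0:ℝ) < (n:ℝ)+1 := by positivity
      have key : Real.log ((n:ℝ)/((n:ℝ)+1)) ≤ (n:ℝ)/((n:ℝ)+1) - 1 :=
        Real.log_le_sub_one_of_pos (by positivity)
      rw [Real.log_div (ne_of_gt hnp) (ne_of_gt hnp1)] at key
      have h2 : (n:ℝ)/((n:ℝ)+1) - 1 = -(1/((n:ℝ)+1)) := by field_simp; ring
      have hlog : Real.log n + 1/((n:ℝ)+1) ≤ Real.log ((n:ℝ)+1) := by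
        rw [h2] at key; linarith
      have := ih hn
      push_cast
      push_cast at this
      linarith
    · have : n = 0 := by omega
      subst this
      norm_num

theorem empirical_mean_predictor_scalar
    (T : ℕ) (hT : 1 ≤ T)
    (ℓ : ℕ → ℝ) (hℓ : ∀ t ∈ Finset.Icc 1 T, ℓ t ∈ Set.Icc (0 : ℝ) 1)
    (mstar : ℝ) (hstar : mstar ∈ Set.Icc (0 : ℝ) 1)
    (m : ℕ → ℝ)
    (hm : ∀ t ∈ Finset.Icc 1 T,
      m t = (∑ τ ∈ Finset.Icc 1 (t - 1), ℓ τ) / ((max 1 (t - 1) : ℕ) : ℝ)) :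
    ∑ t ∈ Finset.Icc 1 T, (ℓ t - m t) ^ 2 ≤
      ∑ t ∈ Finset.Icc 1 T, (ℓ t - mstar) ^ 2 + Real.log T + 1 := by
  set S : ℕ → ℝ := fun t => ∑ τ ∈ Finset.Icc 1 t, ℓ τ with hS
  set Q : ℕ → ℝ := fun t => ∑ τ ∈ Finset.Icc 1 t, (ℓ τ)^2 with hQ
  set V : ℕ → ℝ := fun t => Q t - (S t)^2 / t with hV
  -- successor formulas
  have hSsucc : ∀ n : ℕ, S (n+1) = S n + ℓ (n+1) := by
    intro n
    simp only [hS]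
    rw [Finset.sum_Icc_succ_top (by omega : 1 ≤ n+1)]
  have hQsucc : ∀ n : ℕ, Q (n+1) = Q n + (ℓ (n+1))^2 := by
    intro n
    simp only [hQ]
    rw [Finset.sum_Icc_succ_top (by omega : 1 ≤ n+1)]
  have hV0 : V 0 = 0 := by simp [hV, hQ, hS]
  -- key per-step identity
  have key : ∀ t ∈ Finset.Icc 1 T,
      (ℓ t - m t)^2 * (1 - 1/(t:ℝ)) = V t - V (t-1) := by
    intro t ht
    rw [hm t ht]
    simp only [Finset.mem_Icc] at ht
    rcases Nat.lt_or_ge 1 t with h2 | h1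
    · -- t ≥ 2
      obtain ⟨n, rfl⟩ : ∃ n, t = n + 2 := ⟨t - 2, by omega⟩
      have hsub : n + 2 - 1 = n + 1 := by omega
      rw [hsub]
      have hmax : (1 : ℕ) ⊔ (n + 1) = n + 1 := by omega
      rw [hmax]
      simp only [hV]
      rw [hSsucc (n+1), hQsucc (n+1)]
      have hn1 : ((n:ℝ)+1) ≠ 0 := by positivity
      have hn2 : ((n:ℝ)+2) ≠ 0 := by positivity
      push_cast
      field_simp
      ring
    · -- t = 1
      have : t = 1 := by omega
      subst this
      simp only [hV]
      have h1 : S 1 = ℓ 1 := by simp [hS]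
      have h2 : Q 1 = (ℓ 1)^2 := by simp [hQ]
      norm_num [h1, h2, hS, hQ]
  -- telescoping
  have tel : ∑ t ∈ Finset.Icc 1 T, (V t - V (t-1)) = V T := by
    have gen : ∀ N : ℕ, ∑ t ∈ Finset.Icc 1 N, (V t - V (t-1)) = V N := by
      intro N
      induction N with
      | zero => simp [hV0]
      | succ n ih =>
        rw [Finset.sum_Icc_succ_top (by omega : 1 ≤ n+1), ih]
        have : n + 1 - 1 = n := by omega
        rw [this]
        ring
    exact gen T
  -- m t ∈ [0,1]
  have hmrange : ∀ t ∈ Finset.Icc 1 T, 0 ≤ m t ∧ m t ≤ 1 := by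
    intro t ht
    rw [hm t ht]
    simp only [Finset.mem_Icc] at ht
    have hsub : Finset.Icc 1 (t-1) ⊆ Finset.Icc 1 T := by
      apply Finset.Icc_subset_Icc le_rfl; omega
    have hpos : (0:ℝ) < ((max 1 (t-1) : ℕ) : ℝ) := by
      have : 1 ≤ max 1 (t-1) := le_max_left _ _
      exact_mod_cast Nat.lt_of_lt_of_le Nat.zero_lt_one this
    constructor
    · apply div_nonneg _ (le_of_lt hpos)
      apply Finset.sum_nonneg
      intro τ hτ
      exact (hℓ τ (hsub hτ)).1
    · rw [div_le_one hpos]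
      calc ∑ τ ∈ Finset.Icc 1 (t-1), ℓ τ ≤ ∑ τ ∈ Finset.Icc 1 (t-1), 1 := by
            apply Finset.sum_le_sum
            intro τ hτ
            exact (hℓ τ (hsub hτ)).2
        _ = ((t-1 : ℕ) : ℝ) := by simp
        _ ≤ ((max 1 (t-1) : ℕ) : ℝ) := by exact_mod_cast Nat.cast_le.mpr (le_max_right 1 (t-1))
  -- split the sum
  have split : ∑ t ∈ Finset.Icc 1 T, (ℓ t - m t)^2 =
      V T + ∑ t ∈ Finset.Icc 1 T, (ℓ t - m t)^2 * (1/(t:ℝ)) := by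
    have : ∑ t ∈ Finset.Icc 1 T, (ℓ t - m t)^2 =
        ∑ t ∈ Finset.Icc 1 T, ((ℓ t - m t)^2 * (1 - 1/(t:ℝ)) + (ℓ t - m t)^2 * (1/(t:ℝ))) := by
      apply Finset.sum_congr rfl
      intro t ht
      ring
    rw [this, Finset.sum_add_distrib, Finset.sum_congr rfl key, tel]
  -- bound the correction terms
  have hcorr : ∑ t ∈ Finset.Icc 1 T, (ℓ t - m t)^2 * (1/(t:ℝ)) ≤ Real.log T + 1 := by
    calc ∑ t ∈ Finset.Icc 1 T, (ℓ t - m t)^2 * (1/(t:ℝ))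
        ≤ ∑ t ∈ Finset.Icc 1 T, (1:ℝ)/t := by
          apply Finset.sum_le_sum
          intro t ht
          have h1 := (hℓ t ht).1
          have h2 := (hℓ t ht).2
          have h3 := (hmrange t ht).1
          have h4 := (hmrange t ht).2
          have hsq : (ℓ t - m t)^2 ≤ 1 := by nlinarith
          have htpos : (0:ℝ) ≤ 1/(t:ℝ) := by positivity
          nlinarith
      _ ≤ Real.log T + 1 := harmonic_le_log T hT
  -- V T ≤ loss of mstar
  have expand : ∑ t ∈ Finset.Icc 1 T, (ℓ t - mstar)^2 =
      Q T - 2*mstar*(S T) + T*mstar^2 := by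
    have : ∀ t ∈ Finset.Icc 1 T, (ℓ t - mstar)^2 = (ℓ t)^2 - 2*mstar*(ℓ t) + mstar^2 := by
      intro t _; ring
    rw [Finset.sum_congr rfl this, Finset.sum_add_distrib, Finset.sum_sub_distrib,
      ← Finset.mul_sum, Finset.sum_const, Nat.card_Icc]
    simp only [hQ, hS]
    have : T + 1 - 1 = T := by omega
    rw [this]
    push_cast
    ring
  have hVle : V T ≤ ∑ t ∈ Finset.Icc 1 T, (ℓ t - mstar)^2 := by
    rw [expand]
    simp only [hV]
    have hTpos : (0:ℝ) < T := by exact_mod_cast hT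
    have h1 : (S T - T*mstar)^2 / T ≥ 0 := by positivity
    have h2 : (S T - T*mstar)^2 / T = (S T)^2/T - 2*mstar*(S T) + T*mstar^2 := by
      field_simp
      ring
    linarith
  calc ∑ t ∈ Finset.Icc 1 T, (ℓ t - m t) ^ 2
      = V T + ∑ t ∈ Finset.Icc 1 T, (ℓ t - m t)^2 * (1/(t:ℝ)) := split
    _ ≤ (∑ t ∈ Finset.Icc 1 T, (ℓ t - mstar)^2) + (Real.log T + 1) := add_le_add hVle hcorr
    _ = ∑ t ∈ Finset.Icc 1 T, (ℓ t - mstar) ^ 2 + Real.log T + 1 := by ring
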